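/- Dependent products along tracked maps with recursively-bounded fibers exist: let f : (B,β) → (A,α) be a morphism of assemblies, g : (C,γ) → (A,α) arbitrary; define E = { (a, φ) : a ∈ A, φ : f⁻¹(a) → C_a, and ∃n, n₀ ∈ α(a) and ∀ b ∈ f⁻¹(a), m ∈ β(b), n₁(m) is defined and n₁(m) ∈ γ(φ b) }, with η(a,φ) the set of such n. Then (E, η) with the projection to (A,α) and the tracked evaluation map is an exponential g^f in the slice category of assemblies over (A,α). -/

import Mathlib

/-- Kleene application: evaluate the partial recursive function with code `n` at `m`. -/
def kapp (n m : ℕ) : Part ℕ := (Denumerable.ofNat Nat.Partrec.Code n).eval m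

/-- An assembly over Kleene's first algebra. -/
structure Assembly where
  carrier : Type
  rel : ℕ → carrier → Prop
  surj : ∀ a, ∃ n, rel n a

/-- `r` tracks the function `f` between assemblies. -/
def Tracks (B A : Assembly) (r : ℕ) (f : B.carrier → A.carrier) : Prop :=
  ∀ b n, B.rel n b → ∃ k, k ∈ kapp r n ∧ A.rel k (f b)

/-- A function between assemblies is tracked (is a morphism of assemblies). -/
def Tracked (B A : Assembly) (f : B.carrier → A.carrier) : Prop :=
  ∃ r, Tracks B A r f

/-- Pullback of two assembly maps into a common assembly, with paired realizers. -/
def Assembly.pb (P Q R : Assembly) (u : P.carrier → R.carrier)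
    (v : Q.carrier → R.carrier) : Assembly where
  carrier := {x : P.carrier × Q.carrier // u x.1 = v x.2}
  rel n x := P.rel n.unpair.1 x.val.1 ∧ Q.rel n.unpair.2 x.val.2
  surj := by
    rintro ⟨⟨p, q⟩, _⟩
    obtain ⟨n, hn⟩ := P.surj p
    obtain ⟨m, hm⟩ := Q.surj q
    exact ⟨Nat.pair n m, by simpa using hn, by simpa using hm⟩

/-- The realizability condition on a pair `(a, φ)` with `φ : f⁻¹(a) → C_a`:
`n₀ ∈ α(a)` and for all `b ∈ f⁻¹(a)` and `m ∈ β(b)`, `n₁(m)` is defined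
and `n₁(m) ∈ γ(φ b)`. -/
def expRel (A B C : Assembly) (f : B.carrier → A.carrier) (g : C.carrier → A.carrier)
    (n : ℕ) (a : A.carrier)
    (φ : {b : B.carrier // f b = a} → {c : C.carrier // g c = a}) : Prop :=
  A.rel n.unpair.1 a ∧
  ∀ (b : {b : B.carrier // f b = a}) (m : ℕ), B.rel m b.val →
    ∃ k, k ∈ kapp n.unpair.2 m ∧ C.rel k (φ b).val

/-- The exponential assembly `(E, η)` of `g` by `f` over `(A, α)`. -/
def expAsm (A B C : Assembly) (f : B.carrier → A.carrier)
    (g : C.carrier → A.carrier) : Assembly where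
  carrier := {p : Σ a : A.carrier, ({b : B.carrier // f b = a} → {c : C.carrier // g c = a}) //
    ∃ n, expRel A B C f g n p.1 p.2}
  rel n p := expRel A B C f g n p.val.1 p.val.2
  surj p := p.property

/-- The projection of the exponential assembly to the base. -/
def expProj (A B C : Assembly) (f : B.carrier → A.carrier) (g : C.carrier → A.carrier) :
    (expAsm A B C f g).carrier → A.carrier :=
  fun e => e.val.1

/-- The evaluation map on the pullback of the exponential with `f`. -/
def expEv (A B C : Assembly) (f : B.carrier → A.carrier) (g : C.carrier → A.carrier) :
    ((expAsm A B C f g).pb B A (expProj A B C f g) f).carrier → C.carrier :=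
  fun x => (x.val.1.val.2 ⟨x.val.2, x.property.symm⟩).val


/-- Kleene application of the code of `c` is `c.eval`. -/
lemma kapp_encode (c : Nat.Partrec.Code) (m : ℕ) :
    kapp (Encodable.encode c) m = c.eval m := by
  simp [kapp]

/-- Every partial recursive function has a Kleene code. -/
lemma exists_kapp_code (F : ℕ →. ℕ) (hF : Partrec F) : ∃ r, ∀ n, kapp r n = F n := by
  obtain ⟨c, hc⟩ := Nat.Partrec.Code.exists_code.mp (Partrec.nat_iff.mp hF)
  exact ⟨Encodable.encode c, fun n => by rw [kapp_encode, hc]⟩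

/-- Extensionality for elements of the exponential assembly. -/
lemma expAsm_ext {A B C : Assembly} {f : B.carrier → A.carrier} {g : C.carrier → A.carrier}
    (e1 e2 : (expAsm A B C f g).carrier) (h1 : e1.val.1 = e2.val.1)
    (h2 : ∀ (b : B.carrier) (p1 : f b = e1.val.1) (p2 : f b = e2.val.1),
      (e1.val.2 ⟨b, p1⟩).val = (e2.val.2 ⟨b, p2⟩).val) : e1 = e2 := by
  obtain ⟨⟨a1, φ1⟩, he1⟩ := e1
  obtain ⟨⟨a2, φ2⟩, he2⟩ := e2
  simp only at h1 h2 ⊢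
  subst h1
  suffices hφ : φ1 = φ2 by subst hφ; rfl
  funext b
  exact Subtype.ext (h2 b.val b.property b.property)

/-- `(E, η)` with the projection to `(A, α)` and the tracked evaluation map is an
exponential `g^f` in the slice category of assemblies over `(A, α)`: the projection and
evaluation are tracked, evaluation lies over `A`, and for every tracked map `d : D → A`
and every tracked map `h` over `A` from the pullback `D ×_A B` to `C`, there is a unique
tracked transpose `D → E` over `A` whose composite with evaluation is `h`. -/
theorem expAsm_is_exponential (A B C : Assembly) (f : B.carrier → A.carrier)
    (g : C.carrier → A.carrier) (hf : Tracked B A f) (hg : Tracked C A g) :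
    Tracked (expAsm A B C f g) A (expProj A B C f g) ∧
    Tracked ((expAsm A B C f g).pb B A (expProj A B C f g) f) C (expEv A B C f g) ∧
    (∀ x, g (expEv A B C f g x) = expProj A B C f g x.val.1) ∧
    ∀ (D : Assembly) (d : D.carrier → A.carrier), Tracked D A d →
      ∀ h : (D.pb B A d f).carrier → C.carrier,
        Tracked (D.pb B A d f) C h →
        (∀ x, g (h x) = d x.val.1) →
        ∃ h' : D.carrier → (expAsm A B C f g).carrier,
          Tracked D (expAsm A B C f g) h' ∧
          ∃ hcomm : (fun x => (h' x).val.1) = d,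
            (∀ x : (D.pb B A d f).carrier,
              h x = ((h' x.val.1).val.2
                ⟨x.val.2, ((congrFun hcomm x.val.1).trans x.property).symm⟩).val) ∧
            ∀ h'' : D.carrier → (expAsm A B C f g).carrier,
              Tracked D (expAsm A B C f g) h'' →
              ∀ hcomm'' : (fun x => (h'' x).val.1) = d,
                (∀ x : (D.pb B A d f).carrier,
                  h x = ((h'' x.val.1).val.2
                    ⟨x.val.2, ((congrFun hcomm'' x.val.1).trans x.property).symm⟩).val) →
                h'' = h' := by
  obtain ⟨rf, hrf⟩ := hf
  refine ⟨?_, ?_, ?_, ?_⟩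
  · -- projection is tracked
    obtain ⟨r, hr⟩ := exists_kapp_code (fun n => Part.some n.unpair.1)
      (Computable.partrec (Computable.fst.comp Computable.unpair))
    exact ⟨r, fun e n hn => ⟨n.unpair.1, by rw [hr]; exact Part.mem_some _, hn.1⟩⟩
  · -- evaluation is tracked
    obtain ⟨r, hr⟩ := exists_kapp_code
      (fun p => kapp p.unpair.1.unpair.2 p.unpair.2)
      (Nat.Partrec.Code.eval_part.comp
        ((Computable.ofNat Nat.Partrec.Code).comp <| Computable.snd.comp <|
          Computable.unpair.comp <| Computable.fst.comp Computable.unpair)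
        (Computable.snd.comp Computable.unpair))
    refine ⟨r, fun x n hn => ?_⟩
    obtain ⟨k, hk, hc⟩ := hn.1.2 ⟨x.val.2, x.property.symm⟩ n.unpair.2 hn.2
    exact ⟨k, by rw [hr]; exact hk, hc⟩
  · -- evaluation lies over A
    exact fun x => (x.val.1.val.2 ⟨x.val.2, x.property.symm⟩).property
  · -- universal property
    intro D d hd h hh hover
    obtain ⟨rd, hrd⟩ := hd
    obtain ⟨rh, hrh⟩ := hh
    set ch := Denumerable.ofNat Nat.Partrec.Code rh with hch
    have hch' : ∀ m, kapp rh m = ch.eval m := fun m => rfl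
    set φ : ∀ x : D.carrier, {b : B.carrier // f b = d x} → {c : C.carrier // g c = d x} :=
      fun x b => ⟨h ⟨(x, b.val), b.property.symm⟩, hover ⟨(x, b.val), b.property.symm⟩⟩
      with hφ
    have key : ∀ (x : D.carrier) (p k : ℕ), D.rel p x → A.rel k (d x) →
        expRel A B C f g (Nat.pair k (Encodable.encode (ch.curry p))) (d x) (φ x) := by
      intro x p k hp hk
      constructor
      · simpa using hk
      · intro b m hm
        obtain ⟨k', hk', hc'⟩ := hrh ⟨(x, b.val), b.property.symm⟩ (Nat.pair p m)
          ⟨by simpa using hp, by simpa using hm⟩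
        refine ⟨k', ?_, hc'⟩
        simp only [Nat.unpair_pair]
        rw [kapp_encode, Nat.Partrec.Code.eval_curry]
        rw [hch'] at hk'
        exact hk'
    set h' : D.carrier → (expAsm A B C f g).carrier := fun x =>
      ⟨⟨d x, φ x⟩, by
        obtain ⟨p, hp⟩ := D.surj x
        obtain ⟨k, _, hak⟩ := hrd x p hp
        exact ⟨_, key x p k hp hak⟩⟩ with hh'
    refine ⟨h', ?_, rfl, ?_, ?_⟩
    · -- h' is tracked
      obtain ⟨r, hr⟩ := exists_kapp_code
        (fun p => (kapp rd p).map
          (fun k => Nat.pair k (Encodable.encode (ch.curry p))))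
        ((Nat.Partrec.Code.eval_part.comp
            (Computable.const (Denumerable.ofNat Nat.Partrec.Code rd)) Computable.id).map
          ((Primrec₂.natPair.comp Primrec.snd
            ((Primrec.encode).comp <| Nat.Partrec.Code.primrec₂_curry.comp
              (Primrec.const ch) Primrec.fst)).to_comp.to₂))
      refine ⟨r, fun x p hp => ?_⟩
      obtain ⟨k, hk, hak⟩ := hrd x p hp
      refine ⟨Nat.pair k (Encodable.encode (ch.curry p)), ?_, key x p k hp hak⟩
      rw [hr]
      exact Part.mem_map _ hk
    · -- evaluation of the transpose
      rintro ⟨⟨x, b⟩, prop⟩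
      rfl
    · -- uniqueness
      intro h'' hh'' hcomm'' heval''
      funext x
      refine expAsm_ext _ _ ((congrFun hcomm'' x).trans rfl) ?_
      intro b p1 p2
      have prf : d x = f b := (p1.trans (congrFun hcomm'' x)).symm
      exact (heval'' ⟨(x, b), prf⟩).symm
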